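/- For allocation of a divisible homogeneous good, the proportional-share fairness notion can force a strict loss in weighted Nash social welfare relative to the proportional allocation. Concretely, let two agents have entitlements b_1 = 1/4, b_2 = 3/4 and the same continuous piecewise-linear valuation v on [0,1]: v(x) = (3/4)x for 0 ≤ x ≤ 1/3, v(x) = (3/2)x − 1/4 for 1/3 ≤ x ≤ 2/3, v(x) = 3x − 5/4 for 2/3 ≤ x ≤ 3/4, and v(x) = 1 for 3/4 ≤ x ≤ 1. Then: (i) the unique allocation (x_1, x_2) with x_1, x_2 ≥ 0, x_1 + x_2 = 1, v(x_1) ≥ (1/4)·v(1), and v(x_2) ≥ (3/4)·v(1) is (1/3, 2/3); and (ii) its weighted Nash social welfare is strictly lower than that of the proportional allocation: v(1/3)^{1/4} · v(2/3)^{3/4} < v(1/4)^{1/4} · v(3/4)^{3/4} (equivalently, 27^{1/4}/4 < 48^{1/4}/4). -/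
import Mathlib


namespace Stmt17

/-- The common piecewise-linear valuation of the two agents. -/
noncomputable def v : ℝ → ℝ := fun x =>
  if x ≤ 1/3 then (3/4) * x
  else if x ≤ 2/3 then (3/2) * x - 1/4
  else if x ≤ 3/4 then 3 * x - 5/4
  else 1

lemma v_one : v 1 = 1 := by norm_num [v]
lemma v_third : v (1/3) = 1/4 := by norm_num [v]
lemma v_two_third : v (2/3) = 3/4 := by norm_num [v]
lemma v_quarter : v (1/4) = 3/16 := by norm_num [v]
lemma v_three_quarter : v (3/4) = 1 := by norm_num [v]

/-- with entitlements (1/4, 3/4) and the common valuation `v`,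
(i) the unique allocation giving both agents their proportional share is
(1/3, 2/3), and (ii) it has strictly lower weighted Nash social welfare than
the proportional allocation (1/4, 3/4). -/
theorem stmt_17 :
    -- (1/3, 2/3) gives each agent her proportional share
    ((1/4) * v 1 ≤ v (1/3) ∧ (3/4) * v 1 ≤ v (2/3)) ∧
    -- and it is the unique such allocation
    (∀ x1 x2 : ℝ, 0 ≤ x1 → 0 ≤ x2 → x1 + x2 = 1 →
      (1/4) * v 1 ≤ v x1 → (3/4) * v 1 ≤ v x2 → x1 = 1/3 ∧ x2 = 2/3) ∧
    -- its WNSW is strictly lower than that of the proportional allocation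
    (v (1/3) ^ ((1:ℝ)/4) * v (2/3) ^ ((3:ℝ)/4)
      < v (1/4) ^ ((1:ℝ)/4) * v (3/4) ^ ((3:ℝ)/4)) := by
  refine ⟨⟨by rw [v_one, v_third]; norm_num, by rw [v_one, v_two_third]; norm_num⟩, ?_, ?_⟩
  · intro x1 x2 hx1 hx2 hsum h1 h2
    rw [v_one] at h1 h2
    have hx1' : (1:ℝ)/3 ≤ x1 := by
      by_contra h
      push_neg at h
      have : v x1 = (3/4) * x1 := by simp only [v]; rw [if_pos h.le]
      rw [this] at h1
      nlinarith
    have hx2' : (2:ℝ)/3 ≤ x2 := by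
      by_contra h
      push_neg at h
      rcases le_or_gt x2 (1/3) with h3 | h3
      · have : v x2 = (3/4) * x2 := by simp only [v]; rw [if_pos h3]
        rw [this] at h2; nlinarith
      · have : v x2 = (3/2) * x2 - 1/4 := by
          simp only [v]
          split_ifs with a b c
          all_goals first | rfl | linarith
        rw [this] at h2; nlinarith
    constructor <;> linarith
  · rw [v_third, v_two_third, v_quarter, v_three_quarter]
    have key : ∀ a b : ℝ, 0 ≤ a → 0 ≤ b →
        a ^ ((1:ℝ)/4) * b ^ ((3:ℝ)/4) = (a * b^3) ^ ((1:ℝ)/4) := by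
      intro a b ha hb
      rw [Real.mul_rpow ha (by positivity), ← Real.rpow_natCast b 3,
        ← Real.rpow_mul hb]
      norm_num
    rw [key (1/4) (3/4) (by norm_num) (by norm_num),
      key (3/16) 1 (by norm_num) (by norm_num)]
    apply Real.rpow_lt_rpow (by norm_num) (by norm_num) (by norm_num)

end Stmt17
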